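/- arXiv:2303.09586 — 10 statements merged into one kernel-verified Lean document; each statement's English description precedes it below -/
import Mathlib

section
/- Let K be a convex body, λ ≤ 1/2, γ ≤ 1/10, x ∈ K, and set R = M_K(x) - x. If y ∈ x + λR, then y + γR ⊆ M_K^{2γ}(y). (Translated copies of a Macbeath region act as proxies for nearby Macbeath regions.) -/
/-- The scaled Macbeath region `M_K^λ(x) = x + λ((K - x) ∩ (x - K))`. -/
def macbeathScaled {d : ℕ} (K : Set (EuclideanSpace ℝ (Fin d))) (x : EuclideanSpace ℝ (Fin d))
    (lam : ℝ) : Set (EuclideanSpace ℝ (Fin d)) :=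
  (fun y => x + lam • y) '' (((fun y => y - x) '' K) ∩ ((fun y => x - y) '' K))

/-- let `λ ≤ 1/2`, `γ ≤ 1/10`, `x ∈ K`, and `R = M_K(x) - x`.
If `y ∈ x + λR` then `y + γR ⊆ M_K^{2γ}(y)`: translated copies of a Macbeath region act
as proxies for nearby Macbeath regions. -/
theorem macbeath_translate_proxy {d : ℕ} (K : Set (EuclideanSpace ℝ (Fin d)))
    (hK : Convex ℝ K) (x y : EuclideanSpace ℝ (Fin d)) (hx : x ∈ K)
    (lam gam : ℝ) (hlam0 : 0 < lam) (hlam : lam ≤ 1/2) (hgam0 : 0 < gam) (hgam : gam ≤ 1/10)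
    (R : Set (EuclideanSpace ℝ (Fin d)))
    (hR : R = ((fun z => z - x) '' K) ∩ ((fun z => x - z) '' K))
    (hy : y ∈ (fun z => x + lam • z) '' R) :
    (fun z => y + gam • z) '' R ⊆ macbeathScaled K y (2 * gam) := by
  subst hR
  obtain ⟨r, ⟨⟨k1, hk1, hk1e⟩, -⟩, hyy⟩ := hy
  rintro z ⟨w, ⟨⟨k2, hk2, hk2e⟩, ⟨k3, hk3, hk3e⟩⟩, rfl⟩
  simp only at hk1e hk2e hk3e hyy
  have ha : x + (2*lam) • r ∈ K := by
    have := hK hx hk1 (by linarith : (0:ℝ) ≤ 1 - 2*lam) (by linarith : (0:ℝ) ≤ 2*lam)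
      (by ring)
    convert this using 1
    rw [← hk1e]; module
  have hplus : y + (1/2:ℝ) • w ∈ K := by
    have := hK ha hk2 (by norm_num : (0:ℝ) ≤ 1/2) (by norm_num : (0:ℝ) ≤ 1/2)
      (by norm_num : (1/2:ℝ) + 1/2 = 1)
    convert this using 1
    rw [← hyy, ← hk2e]; module
  have hminus : y - (1/2:ℝ) • w ∈ K := by
    have := hK ha hk3 (by norm_num : (0:ℝ) ≤ 1/2) (by norm_num : (0:ℝ) ≤ 1/2)
      (by norm_num : (1/2:ℝ) + 1/2 = 1)
    convert this using 1
    rw [← hyy, ← hk3e]; module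
  refine ⟨(1/2:ℝ) • w, ⟨⟨y + (1/2:ℝ) • w, hplus, by module⟩,
    ⟨y - (1/2:ℝ) • w, hminus, by module⟩⟩, ?_⟩
  show y + (2*gam) • ((1/2:ℝ) • w) = y + gam • w
  module
end

section
/- Let K be a convex body, x ∈ K, λ ≤ 1/2, γ ≤ 1/10, R = M_K(x) - x, and y ∈ x + λR. Then y + (1 - λ)R ⊆ M_K(y). -/
/-- The Macbeath region `M_K(x) = x + ((K - x) ∩ (x - K))`. -/
def macbeath {d : ℕ} (K : Set (EuclideanSpace ℝ (Fin d))) (x : EuclideanSpace ℝ (Fin d)) :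
    Set (EuclideanSpace ℝ (Fin d)) :=
  (fun y => x + y) '' (((fun y => y - x) '' K) ∩ ((fun y => x - y) '' K))

/-- with `λ ≤ 1/2`, `γ ≤ 1/10`, `R = M_K(x) - x`, and `y ∈ x + λR`,
we have `y + (1 - λ)R ⊆ M_K(y)`. -/
theorem macbeath_translate_key {d : ℕ} (K : Set (EuclideanSpace ℝ (Fin d)))
    (hK : Convex ℝ K) (x y : EuclideanSpace ℝ (Fin d)) (hx : x ∈ K)
    (lam gam : ℝ) (hlam0 : 0 < lam) (hlam : lam ≤ 1/2) (hgam0 : 0 < gam) (hgam : gam ≤ 1/10)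
    (R : Set (EuclideanSpace ℝ (Fin d)))
    (hR : R = ((fun z => z - x) '' K) ∩ ((fun z => x - z) '' K))
    (hy : y ∈ (fun z => x + lam • z) '' R) :
    (fun z => y + (1 - lam) • z) '' R ⊆ macbeath K y := by
  obtain ⟨r, hr, hyeq⟩ := hy
  rw [hR] at hr
  obtain ⟨⟨k1, hk1, hk1e⟩, ⟨k2, hk2, hk2e⟩⟩ := hr
  simp only at hk1e hk2e hyeq
  rintro w ⟨z, hz, rfl⟩
  rw [hR] at hz
  obtain ⟨⟨m1, hm1, hm1e⟩, ⟨m2, hm2, hm2e⟩⟩ := hz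
  simp only at hm1e hm2e
  have h01 : (0:ℝ) ≤ 1 - lam := by linarith
  have hsum : lam + (1 - lam) = 1 := by ring
  -- y + (1-lam)•z = lam • k1 + (1-lam) • m1 ∈ K
  have hA : y + (1 - lam) • z ∈ K := by
    have := hK hk1 hm1 hlam0.le h01 hsum
    convert this using 1
    rw [← hyeq, ← hk1e, ← hm1e]
    simp only [smul_sub]
    module
  -- y - (1-lam)•z = lam • k1 + (1-lam) • m2 ∈ K
  have hB : y - (1 - lam) • z ∈ K := by
    have := hK hk1 hm2 hlam0.le h01 hsum
    convert this using 1
    rw [← hyeq, ← hk1e, ← hm2e]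
    simp only [smul_sub]
    module
  refine ⟨(1 - lam) • z, ⟨⟨y + (1 - lam) • z, hA, by simp⟩,
    ⟨y - (1 - lam) • z, hB, by simp⟩⟩, rfl⟩
end

section
/- Let C be a cap of a convex body K (the intersection of K with a halfspace) and let C^λ be its λ-expansion for λ ≥ 1 (the cap cut by a hyperplane parallel to the base of C whose absolute width is λ times that of C). Then C^λ is contained in the image of C under scaling by factor λ about the apex of C, and consequently vol(C^λ) ≤ λ^d · vol(C). -/
open RealInnerProductSpace MeasureTheory

/-- Let `C = K ∩ {z | t ≤ ⟨z,u⟩}` be a cap of the convex body `K`, with apex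
`a ∈ K` (a point of `K` on the parallel supporting hyperplane `⟨·,u⟩ = ⟨a,u⟩`). For `λ ≥ 1`,
the `λ`-expansion `C^λ` (the cap cut by the parallel hyperplane whose absolute width is `λ`
times that of `C`) is contained in the image of `C` under scaling by factor `λ` about the
apex `a`, and consequently `vol(C^λ) ≤ λ^d · vol(C)`. -/
theorem cap_expansion {d : ℕ} (K : Set (EuclideanSpace ℝ (Fin d)))
    (hK : Convex ℝ K) (hKc : IsCompact K)
    (u : EuclideanSpace ℝ (Fin d)) (hu : ‖u‖ = 1)
    (a : EuclideanSpace ℝ (Fin d)) (ha : a ∈ K)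
    (hapex : ∀ z ∈ K, ⟪z, u⟫ ≤ ⟪a, u⟫)
    (t : ℝ) (ht : t ≤ ⟪a, u⟫) (lam : ℝ) (hlam : 1 ≤ lam) :
    K ∩ {z | ⟪a, u⟫ - lam * (⟪a, u⟫ - t) ≤ ⟪z, u⟫} ⊆
      (fun z => a + lam • (z - a)) '' (K ∩ {z | t ≤ ⟪z, u⟫}) ∧
    volume (K ∩ {z | ⟪a, u⟫ - lam * (⟪a, u⟫ - t) ≤ ⟪z, u⟫}) ≤
      ENNReal.ofReal (lam ^ d) * volume (K ∩ {z | t ≤ ⟪z, u⟫}) := by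
  have hlam0 : 0 < lam := lt_of_lt_of_le one_pos hlam
  have hsub : K ∩ {z | ⟪a, u⟫ - lam * (⟪a, u⟫ - t) ≤ ⟪z, u⟫} ⊆
      (fun z => a + lam • (z - a)) '' (K ∩ {z | t ≤ ⟪z, u⟫}) := by
    rintro z ⟨hzK, hzt⟩
    refine ⟨a + lam⁻¹ • (z - a), ⟨?_, ?_⟩, ?_⟩
    · have : a + lam⁻¹ • (z - a) = (1 - lam⁻¹) • a + lam⁻¹ • z := by
        module
      rw [this]
      exact hK ha hzK (by simp [inv_le_one_of_one_le₀ hlam])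
        (by positivity) (by ring)
    · simp only [Set.mem_setOf_eq] at hzt ⊢
      have h1 : ⟪a + lam⁻¹ • (z - a), u⟫ = ⟪a, u⟫ + lam⁻¹ * (⟪z, u⟫ - ⟪a, u⟫) := by
        rw [inner_add_left, real_inner_smul_left, inner_sub_left]
      rw [h1]
      have h2 : lam * (⟪a, u⟫ - t) ≥ ⟪a, u⟫ - ⟪z, u⟫ := by linarith
      have h3 : lam⁻¹ * (⟪a, u⟫ - ⟪z, u⟫) ≤ ⟪a, u⟫ - t := by
        rw [inv_mul_le_iff₀ hlam0]; linarith [mul_comm lam (⟪a, u⟫ - t)]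
      linarith
    · simp [add_sub_cancel_left, smul_smul, mul_inv_cancel₀ hlam0.ne']
  refine ⟨hsub, ?_⟩
  calc volume (K ∩ {z | ⟪a, u⟫ - lam * (⟪a, u⟫ - t) ≤ ⟪z, u⟫})
      ≤ volume ((fun z => a + lam • (z - a)) '' (K ∩ {z | t ≤ ⟪z, u⟫})) :=
        measure_mono hsub
    _ = ENNReal.ofReal (lam ^ d) * volume (K ∩ {z | t ≤ ⟪z, u⟫}) := by
        have heq : (fun z : EuclideanSpace ℝ (Fin d) => a + lam • (z - a)) =
            (AffineMap.homothety a lam : EuclideanSpace ℝ (Fin d) → EuclideanSpace ℝ (Fin d)) := by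
          funext z
          simp [AffineMap.homothety_apply]
          abel
        rw [heq, Measure.addHaar_image_homothety]
        congr 2
        rw [abs_of_pos (by positivity)]
        simp [finrank_euclideanSpace_fin]
end

section
/- Let K be a convex body containing the origin in its interior, let C₁ ⊆ C₂ be two caps of K neither of which contains the origin. Then the relative width of C₁ is at most the relative width of C₂. -/
open RealInnerProductSpace

/-- Let `K` be a convex body containing the origin in its interior, and let
`C₁ ⊆ C₂` be two caps of `K` neither of which contains the origin (equivalently, cut off by
hyperplanes `⟨·,uᵢ⟩ = tᵢ` with `tᵢ > 0`, with supporting values `sᵢ = max_{z ∈ K} ⟨z,uᵢ⟩`).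
Then the relative width `(s₁ - t₁)/s₁` of `C₁` is at most the relative width
`(s₂ - t₂)/s₂` of `C₂`. -/
theorem cap_containment_width {d : ℕ} (K : Set (EuclideanSpace ℝ (Fin d)))
    (hK : Convex ℝ K) (hKc : IsCompact K)
    (h0 : (0 : EuclideanSpace ℝ (Fin d)) ∈ interior K)
    (u₁ u₂ : EuclideanSpace ℝ (Fin d)) (hu₁ : ‖u₁‖ = 1) (hu₂ : ‖u₂‖ = 1)
    (s₁ s₂ t₁ t₂ : ℝ)
    (hs₁ : ∀ z ∈ K, ⟪z, u₁⟫ ≤ s₁) (hs₁' : ∃ z ∈ K, ⟪z, u₁⟫ = s₁)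
    (hs₂ : ∀ z ∈ K, ⟪z, u₂⟫ ≤ s₂) (hs₂' : ∃ z ∈ K, ⟪z, u₂⟫ = s₂)
    (ht₁ : 0 < t₁) (ht₂ : 0 < t₂)
    (hne : (K ∩ {z | t₁ ≤ ⟪z, u₁⟫}).Nonempty)
    (hsub : K ∩ {z | t₁ ≤ ⟪z, u₁⟫} ⊆ K ∩ {z | t₂ ≤ ⟪z, u₂⟫}) :
    (s₁ - t₁) / s₁ ≤ (s₂ - t₂) / s₂ := by
  obtain ⟨p₁, hp₁K, hp₁s⟩ := hs₁'
  obtain ⟨w, hwK, hwt⟩ := hne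
  have hs₁t : t₁ ≤ s₁ := le_trans hwt (hs₁ w hwK)
  have hs₁pos : 0 < s₁ := lt_of_lt_of_le ht₁ hs₁t
  -- the point p = (t₁/s₁) • p₁ lies in K and in the cap C₁
  set c : ℝ := t₁ / s₁ with hc
  have hc0 : 0 ≤ c := div_nonneg ht₁.le hs₁pos.le
  have hc1 : c ≤ 1 := div_le_one_of_le₀ hs₁t hs₁pos.le
  have h0K : (0 : EuclideanSpace ℝ (Fin d)) ∈ K := interior_subset h0
  have hpK : c • p₁ ∈ K := by
    have := hK h0K hp₁K (a := 1 - c) (b := c) (by linarith) hc0 (by ring)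
    simpa using this
  have hpC₁ : c • p₁ ∈ K ∩ {z | t₁ ≤ ⟪z, u₁⟫} := by
    refine ⟨hpK, ?_⟩
    simp only [Set.mem_setOf_eq, real_inner_smul_left, hp₁s]
    rw [hc, div_mul_cancel₀ _ hs₁pos.ne']
  have hpC₂ := hsub hpC₁
  have ht₂le : t₂ ≤ c * ⟪p₁, u₂⟫ := by
    have := hpC₂.2
    rw [Set.mem_setOf_eq, real_inner_smul_left] at this; exact this
  have hip₂ : ⟪p₁, u₂⟫ ≤ s₂ := hs₂ p₁ hp₁K
  have hs₂pos : 0 < s₂ := by nlinarith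
  have key : t₂ / s₂ ≤ t₁ / s₁ := by
    rw [div_le_iff₀ hs₂pos]
    calc t₂ ≤ c * ⟪p₁, u₂⟫ := ht₂le
    _ ≤ c * s₂ := by nlinarith
    _ = t₁ / s₁ * s₂ := by rw [hc]
  have h1 : (s₁ - t₁) / s₁ = 1 - t₁ / s₁ := by field_simp
  have h2 : (s₂ - t₂) / s₂ = 1 - t₂ / s₂ := by field_simp
  rw [h1, h2]; linarith
end

section
/- Let K be a convex body with the origin in its interior and let p ∈ K, p ≠ O. Let p₀ be the intersection of the ray Op with ∂K, let h₀ be a supporting hyperplane of K at p₀, and let C be the cap cut by the hyperplane through p parallel to h₀. Then width(C) = ray(p), and C has minimum relative width among all caps of K containing p. -/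
open RealInnerProductSpace

/-- Let `K` be a convex body with the origin in its interior and `p ∈ K`,
`p ≠ O`. Let `p₀ = c • p` (with `c ≥ 1`) be the intersection of the ray `Op` with `∂K`,
let `u` be the outer unit normal of a supporting hyperplane `h₀` of `K` at `p₀`, and let
`C` be the cap cut by the hyperplane through `p` parallel to `h₀`.  Then
`width(C) = (⟨p₀,u⟩ - ⟨p,u⟩)/⟨p₀,u⟩` equals `ray(p) = ‖p - p₀‖/‖p₀‖`, and `C` has minimum
relative width among all caps of `K` (not containing the origin) that contain `p`. -/
theorem min_width_cap {d : ℕ} (K : Set (EuclideanSpace ℝ (Fin d)))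
    (hK : Convex ℝ K) (hKc : IsCompact K)
    (h0 : (0 : EuclideanSpace ℝ (Fin d)) ∈ interior K)
    (p : EuclideanSpace ℝ (Fin d)) (hp : p ∈ K) (hpne : p ≠ 0)
    (c : ℝ) (hc : 1 ≤ c) (hp₀ : c • p ∈ frontier K)
    (u : EuclideanSpace ℝ (Fin d)) (hu : ‖u‖ = 1)
    (hsupp : ∀ z ∈ K, ⟪z, u⟫ ≤ ⟪c • p, u⟫) :
    (⟪c • p, u⟫ - ⟪p, u⟫) / ⟪c • p, u⟫ = ‖p - c • p‖ / ‖c • p‖ ∧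
    (∀ (v : EuclideanSpace ℝ (Fin d)) (t' s' : ℝ), ‖v‖ = 1 → 0 < t' → t' ≤ ⟪p, v⟫ →
      (∀ z ∈ K, ⟪z, v⟫ ≤ s') → (∃ z ∈ K, ⟪z, v⟫ = s') →
      (⟪c • p, u⟫ - ⟪p, u⟫) / ⟪c • p, u⟫ ≤ (s' - t') / s') := by
  have hc0 : (0:ℝ) < c := lt_of_lt_of_le one_pos hc
  -- ⟪p,u⟫ > 0: take ε • u ∈ K from interior ball at 0
  have hpu : 0 < ⟪p, u⟫ := by
    obtain ⟨ε, hε, hball⟩ := Metric.isOpen_iff.1 isOpen_interior 0 h0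
    have hmem : (ε/2) • u ∈ K := by
      apply interior_subset
      apply hball
      simp only [Metric.mem_ball, dist_zero_right, norm_smul, hu, mul_one,
        Real.norm_eq_abs, abs_of_pos (half_pos hε)]
      linarith
    have := hsupp _ hmem
    rw [real_inner_smul_left, real_inner_smul_left, real_inner_self_eq_norm_sq, hu] at this
    nlinarith [half_pos hε]
  constructor
  · rw [real_inner_smul_left]
    set a := ⟪p, u⟫ with ha
    have h1 : p - c • p = (1 - c) • p := by
      rw [sub_smul, one_smul]
    rw [h1, norm_smul, norm_smul, Real.norm_eq_abs, Real.norm_eq_abs,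
      abs_of_nonpos (by linarith), abs_of_pos hc0]
    have hpn : (0:ℝ) < ‖p‖ := norm_pos_iff.2 hpne
    field_simp
    ring
  · intro v t' s' hv ht' htp hsub ⟨z, hz, hzs⟩
    rw [real_inner_smul_left]
    have hpvK : c • p ∈ K := hKc.isClosed.frontier_subset hp₀
    have hcp : c * ⟪p, v⟫ ≤ s' := by
      have := hsub _ hpvK
      rwa [real_inner_smul_left] at this
    have hs' : 0 < s' := lt_of_lt_of_le (by nlinarith) hcp
    rw [div_le_div_iff₀ (by positivity) hs']
    have h2 : c * t' ≤ s' := le_trans (by nlinarith) hcp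
    nlinarith [mul_le_mul_of_nonneg_left h2 hpu.le]
end

section
/- Let K₀ ⊆ K₁ be convex bodies with the origin in the interior of K₀. The polar of the arithmetic-mean body equals the harmonic-mean body of the polars: (K_A(K₀,K₁))* = K_H(K₁*, K₀*). In particular, the harmonic-mean body is convex. -/
open RealInnerProductSpace
open scoped Pointwise

/-- The polar body `K* = {u : ⟨u,v⟩ ≤ 1 for all v ∈ K}`. -/
def polarBody {d : ℕ} (K : Set (EuclideanSpace ℝ (Fin d))) : Set (EuclideanSpace ℝ (Fin d)) :=
  {u | ∀ v ∈ K, ⟪u, v⟫ ≤ 1}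

lemma mem_smul_polarBody {d : ℕ} {K : Set (EuclideanSpace ℝ (Fin d))}
    {u : EuclideanSpace ℝ (Fin d)} {r : ℝ} (hr : 0 < r)
    (h : ∀ v ∈ K, ⟪u, v⟫ ≤ r) : u ∈ r • polarBody K := by
  rw [Set.mem_smul_set_iff_inv_smul_mem₀ (ne_of_gt hr)]
  intro v hv
  rw [real_inner_smul_left]
  calc r⁻¹ * ⟪u, v⟫ ≤ r⁻¹ * r := by
        exact mul_le_mul_of_nonneg_left (h v hv) (inv_nonneg.mpr hr.le)
    _ = 1 := inv_mul_cancel₀ (ne_of_gt hr)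

lemma gauge_polarBody_eq {d : ℕ} {K : Set (EuclideanSpace ℝ (Fin d))}
    (hKc : IsCompact K) (h0 : (0 : EuclideanSpace ℝ (Fin d)) ∈ K)
    (u : EuclideanSpace ℝ (Fin d)) :
    gauge (polarBody K) u = sSup ((fun v => ⟪u, v⟫) '' K) := by
  set M := sSup ((fun v => ⟪u, v⟫) '' K) with hM
  have hne : ((fun v => ⟪u, v⟫) '' K).Nonempty := ⟨_, Set.mem_image_of_mem _ h0⟩
  have hcont : Continuous fun v : EuclideanSpace ℝ (Fin d) => ⟪u, v⟫ :=
    continuous_const.inner continuous_id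
  have hbdd : BddAbove ((fun v => ⟪u, v⟫) '' K) := (hKc.image hcont).bddAbove
  have hM0 : 0 ≤ M := by
    have : ⟪u, (0 : EuclideanSpace ℝ (Fin d))⟫ ≤ M :=
      le_csSup hbdd (Set.mem_image_of_mem _ h0)
    simpa [inner_zero_right] using this
  have hmem : ∀ r, M < r → u ∈ r • polarBody K := by
    intro r hr
    exact mem_smul_polarBody (lt_of_le_of_lt hM0 hr)
      (fun v hv => le_trans (le_csSup hbdd (Set.mem_image_of_mem _ hv)) hr.le)
  apply le_antisymm
  · refine le_of_forall_gt_imp_ge_of_dense fun r hr => ?_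
    exact gauge_le_of_mem (le_of_lt (lt_of_le_of_lt hM0 hr)) (hmem r hr)
  · rw [gauge_def]
    refine le_csInf ⟨M + 1, ?_, hmem (M + 1) (by linarith)⟩ ?_
    · simp only [Set.mem_Ioi]; linarith
    · rintro b ⟨hb, hub⟩
      simp only [Set.mem_Ioi] at hb
      rw [Set.mem_smul_set_iff_inv_smul_mem₀ (ne_of_gt hb)] at hub
      refine csSup_le hne ?_
      rintro x ⟨v, hv, rfl⟩
      have := hub v hv
      rw [real_inner_smul_left] at this
      calc ⟪u, v⟫ = b * (b⁻¹ * ⟪u, v⟫) := by field_simp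
        _ ≤ b * 1 := mul_le_mul_of_nonneg_left this hb.le
        _ = b := mul_one b

/-- Let `K₀ ⊆ K₁` be convex bodies with the origin in the interior of `K₀`.
The polar of the arithmetic-mean body `K_A(K₀,K₁) = ½(K₀ ⊕ K₁)` equals the harmonic-mean
body of the polars, `K_H(K₁*, K₀*)` (the body whose gauge functional is the mean of the
gauges of `K₁*` and `K₀*`, equivalently whose radial function is the harmonic mean of
theirs). In particular, the harmonic-mean body is convex. -/
theorem polar_arithmeticMean_eq_harmonicMean {d : ℕ} (K₀ K₁ : Set (EuclideanSpace ℝ (Fin d)))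
    (hK₀ : Convex ℝ K₀) (hK₁ : Convex ℝ K₁)
    (hK₀c : IsCompact K₀) (hK₁c : IsCompact K₁)
    (h0 : (0 : EuclideanSpace ℝ (Fin d)) ∈ interior K₀)
    (hsub : K₀ ⊆ K₁) :
    polarBody ((2⁻¹ : ℝ) • (K₀ + K₁)) =
      {x | (gauge (polarBody K₁) x + gauge (polarBody K₀) x) / 2 ≤ 1} ∧
    Convex ℝ {x | (gauge (polarBody K₁) x + gauge (polarBody K₀) x) / 2 ≤ 1} := by
  have h00 : (0 : EuclideanSpace ℝ (Fin d)) ∈ K₀ := interior_subset h0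
  have h01 : (0 : EuclideanSpace ℝ (Fin d)) ∈ K₁ := hsub h00
  have heq : polarBody ((2⁻¹ : ℝ) • (K₀ + K₁)) =
      {x | (gauge (polarBody K₁) x + gauge (polarBody K₀) x) / 2 ≤ 1} := by
    ext u
    rw [Set.mem_setOf_eq, gauge_polarBody_eq hK₁c h01 u, gauge_polarBody_eq hK₀c h00 u]
    have hcont : Continuous fun v : EuclideanSpace ℝ (Fin d) => ⟪u, v⟫ :=
      continuous_const.inner continuous_id
    have hbdd₀ : BddAbove ((fun v => ⟪u, v⟫) '' K₀) := (hK₀c.image hcont).bddAbove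
    have hbdd₁ : BddAbove ((fun v => ⟪u, v⟫) '' K₁) := (hK₁c.image hcont).bddAbove
    have hne₀ : ((fun v => ⟪u, v⟫) '' K₀).Nonempty := ⟨_, Set.mem_image_of_mem _ h00⟩
    have hne₁ : ((fun v => ⟪u, v⟫) '' K₁).Nonempty := ⟨_, Set.mem_image_of_mem _ h01⟩
    constructor
    · intro h
      obtain ⟨v₀, hv₀, hmax₀⟩ := hK₀c.exists_isMaxOn ⟨0, h00⟩ hcont.continuousOn
      obtain ⟨v₁, hv₁, hmax₁⟩ := hK₁c.exists_isMaxOn ⟨0, h01⟩ hcont.continuousOn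
      have hs₀ : sSup ((fun v => ⟪u, v⟫) '' K₀) = ⟪u, v₀⟫ :=
        le_antisymm (csSup_le hne₀ (by rintro x ⟨w, hw, rfl⟩; exact hmax₀ hw))
          (le_csSup hbdd₀ (Set.mem_image_of_mem _ hv₀))
      have hs₁ : sSup ((fun v => ⟪u, v⟫) '' K₁) = ⟪u, v₁⟫ :=
        le_antisymm (csSup_le hne₁ (by rintro x ⟨w, hw, rfl⟩; exact hmax₁ hw))
          (le_csSup hbdd₁ (Set.mem_image_of_mem _ hv₁))
      have hz : (2⁻¹ : ℝ) • (v₀ + v₁) ∈ (2⁻¹ : ℝ) • (K₀ + K₁) :=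
        Set.smul_mem_smul_set (Set.add_mem_add hv₀ hv₁)
      have := h _ hz
      rw [real_inner_smul_right, inner_add_right] at this
      rw [hs₀, hs₁]
      linarith
    · intro h
      show ∀ z ∈ (2⁻¹ : ℝ) • (K₀ + K₁), ⟪u, z⟫ ≤ 1
      intro z hz
      obtain ⟨y, hy, rfl⟩ := hz
      obtain ⟨v, hv, w, hw, rfl⟩ := hy
      have h₀ : ⟪u, v⟫ ≤ sSup ((fun v => ⟪u, v⟫) '' K₀) :=
        le_csSup hbdd₀ (Set.mem_image_of_mem _ hv)
      have h₁ : ⟪u, w⟫ ≤ sSup ((fun v => ⟪u, v⟫) '' K₁) :=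
        le_csSup hbdd₁ (Set.mem_image_of_mem _ hw)
      rw [real_inner_smul_right, inner_add_right]
      linarith
  have hconv : Convex ℝ (polarBody ((2⁻¹ : ℝ) • (K₀ + K₁))) := by
    intro x hx y hy a b ha hb hab
    intro v hv
    have hxv := hx v hv
    have hyv := hy v hv
    calc ⟪a • x + b • y, v⟫ = a * ⟪x, v⟫ + b * ⟪y, v⟫ := by
          rw [inner_add_left, real_inner_smul_left, real_inner_smul_left]
      _ ≤ a * 1 + b * 1 :=
          add_le_add (mul_le_mul_of_nonneg_left hxv ha) (mul_le_mul_of_nonneg_left hyv hb)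
      _ = 1 := by linarith
  exact ⟨heq, heq ▸ hconv⟩
end

section
/- Let O, b, c, d, h, h' be collinear points (in the order h', b, c, h on the line through O, with d beyond h) such that (O,h;d,c) = -1 (harmonic bundle). If (h',c;h,b) ≤ -λ, then (O,c;h,b) ≤ -λ and (O,c;d,b) = (O,c;h,b)/2, hence (O,c;d,b) ≤ -λ/2. -/
/-- The cross ratio `(a,b;c,d)` of four collinear points, coordinatized by reals, with
signed distances: `(a,b;c,d) = (‖ac‖/‖ad‖)/(‖bc‖/‖bd‖)`. -/
noncomputable def crossRatio (a b c d : ℝ) : ℝ := ((c - a) / (d - a)) / ((c - b) / (d - b))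

/-- Let `O, b, c, d, h, h'` be collinear points (coordinatized by reals), in
the order `h', O, b, c, h` with `d` beyond `h`, such that `(O,h;d,c) = -1` (harmonic
bundle). If `(h',c;h,b) ≤ -λ`, then `(O,c;h,b) ≤ -λ` and `(O,c;d,b) = (O,c;h,b)/2`, hence
`(O,c;d,b) ≤ -λ/2`. -/
theorem cross_ratio_harmonic_halving (O b c d h h' lam : ℝ) (hlam : 0 < lam)
    (ord₀ : h' < O) (ord₁ : O < b) (ord₂ : b < c) (ord₃ : c < h) (ord₄ : h < d)
    (hharm : crossRatio O h d c = -1)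
    (hcr : crossRatio h' c h b ≤ -lam) :
    crossRatio O c h b ≤ -lam ∧
    crossRatio O c d b = crossRatio O c h b / 2 ∧
    crossRatio O c d b ≤ -lam / 2 := by
  have hbO : (0:ℝ) < b - O := by linarith
  have hbh' : (0:ℝ) < b - h' := by linarith
  have hcb : b - c < 0 := by linarith
  have hhc : (0:ℝ) < h - c := by linarith
  have hdc : (0:ℝ) < d - c := by linarith
  have hcO : (0:ℝ) < c - O := by linarith
  have hdh : (0:ℝ) < d - h := by linarith
  unfold crossRatio at *
  have hne : (c - O) * (d - h) ≠ 0 := by positivity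
  have harm' : (d - O) * (c - h) + (c - O) * (d - h) = 0 := by
    field_simp at hharm
    linarith
  have hK : (h - c) / (b - c) < 0 := div_neg_of_pos_of_neg hhc hcb
  have first : (h - O) / (b - O) / ((h - c) / (b - c)) ≤ -lam := by
    rw [div_le_iff_of_neg hK] at hcr ⊢
    have hmon : (h - h') / (b - h') ≤ (h - O) / (b - O) := by
      rw [div_le_div_iff₀ hbh' hbO]; nlinarith
    linarith
  have h2 : 2 * (d - O) * (h - c) = (h - O) * (d - c) := by linear_combination -harm'
  have L : (d - O) / (b - O) / ((d - c) / (b - c)) = ((d - O) * (b - c)) / ((b - O) * (d - c)) := by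
    rw [div_div_eq_mul_div, div_mul_eq_mul_div, div_div, mul_comm (b-O)]
  have R : (h - O) / (b - O) / ((h - c) / (b - c)) / 2 = ((h - O) * (b - c)) / ((b - O) * (h - c) * 2) := by
    rw [div_div_eq_mul_div, div_mul_eq_mul_div, div_div, div_div]
    congr 1; ring
  have heq : (d - O) / (b - O) / ((d - c) / (b - c)) = (h - O) / (b - O) / ((h - c) / (b - c)) / 2 := by
    rw [L, R, div_eq_div_iff (by positivity) (by positivity)]
    linear_combination (b - c) * (b - O) * h2
  exact ⟨first, heq, by rw [heq]; linarith⟩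
end

section
/- Let K ⊆ ℝ^d be a convex body containing the origin in its interior and let 0 < ε ≤ 1/2. Every Macbeath region M_K^{1/2}(x) centered at a point x with relative ray distance ray_K(x) ≤ ε is contained in the shell K \ (1-2ε)K, and the relative volume of this shell satisfies vol(K \ (1-2ε)K)/vol(K) = 1 - (1-2ε)^d ≤ 2dε. -/
open MeasureTheory
open scoped Pointwise

/-- let `K` be a convex body containing the origin in its interior and
`0 < ε ≤ 1/2`. Every Macbeath region `M_K^{1/2}(x)` centered at a point `x` at relative ray
distance at most `ε` (i.e. `x = (1-δ)•p₀` for a boundary point `p₀` on the ray `Ox`, with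
`0 ≤ δ ≤ ε`) is contained in the shell `K \ (1-2ε)K`, and the relative volume of this shell
is `vol(K \ (1-2ε)K)/vol(K) = 1 - (1-2ε)^d ≤ 2dε`. -/
theorem macbeath_in_shell {d : ℕ} (K : Set (EuclideanSpace ℝ (Fin d)))
    (hK : Convex ℝ K) (hKc : IsCompact K)
    (h0 : (0 : EuclideanSpace ℝ (Fin d)) ∈ interior K)
    (ε : ℝ) (hε : 0 < ε) (hε' : ε ≤ 1/2) :
    (∀ (x p₀ : EuclideanSpace ℝ (Fin d)) (δ : ℝ), x ∈ K → 0 ≤ δ → δ ≤ ε →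
        p₀ ∈ frontier K → x = (1 - δ) • p₀ →
        macbeathScaled K x (1/2) ⊆ K \ (1 - 2*ε) • K) ∧
    volume (K \ (1 - 2*ε) • K) = ENNReal.ofReal (1 - (1 - 2*ε)^d) * volume K ∧
    (1 - (1 - 2*ε)^d : ℝ) ≤ 2 * d * ε := by
  have h0K : (0 : EuclideanSpace ℝ (Fin d)) ∈ K := interior_subset h0
  have hr0 : (0:ℝ) ≤ 1 - 2*ε := by linarith
  have hr1 : 1 - 2*ε ≤ 1 := by linarith
  refine ⟨?_, ?_, ?_⟩
  · rintro x p₀ δ hx hδ0 hδε hfr hxp z hz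
    obtain ⟨w, ⟨⟨k₁, hk₁, hw1⟩, ⟨k₂, hk₂, hw2⟩⟩, hzw⟩ := hz
    dsimp only at hzw hw1 hw2
    constructor
    · have : z = (1/2:ℝ) • x + (1/2:ℝ) • k₁ := by
        rw [← hzw, ← hw1]; module
      rw [this]
      exact hK hx hk₁ (by norm_num) (by norm_num) (by norm_num)
    · intro hzmem
      obtain ⟨k₃, hk₃, hz3⟩ := hzmem
      dsimp only at hz3
      -- hz3 : (1 - 2*ε) • k₃ = z
      have hδ : δ ≤ 1/2 := le_trans hδε hε'
      have hc : (0:ℝ) < 1 - δ := by linarith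
      have h3c : (0:ℝ) < 3 * (1 - δ) := by linarith
      have key : ((3*(1-δ))/2) • p₀ = (1-2*ε) • k₃ + (1/2:ℝ) • k₂ := by
        rw [hz3, ← hzw, ← hw2, hxp]; module
      set a : ℝ := 2/(3*(1-δ)) * (1-2*ε) with ha_def
      set b : ℝ := 2/(3*(1-δ)) * (1/2) with hb_def
      have hp : p₀ = a • k₃ + b • k₂ := by
        have := congrArg (fun v => (2/(3*(1-δ)):ℝ) • v) key
        simp only [smul_smul, smul_add] at this
        rw [show (2/(3*(1-δ)) * ((3*(1-δ))/2) : ℝ) = 1 by field_simp] at this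
        rw [one_smul] at this
        rw [this]
      have ha0 : 0 ≤ a := by positivity
      have hb0 : 0 < b := by positivity
      set s : ℝ := a + b with hs_def
      have hs0 : 0 < s := by linarith
      have hs1 : s < 1 := by
        have : s = (3 - 4*ε)/(3*(1-δ)) := by
          rw [hs_def, ha_def, hb_def, ← mul_add, div_mul_eq_mul_div]; congr 1; ring
        rw [this, div_lt_one h3c]; linarith
      have hq : (a/s) • k₃ + (b/s) • k₂ ∈ K :=
        hK hk₃ hk₂ (div_nonneg ha0 hs0.le) (div_nonneg hb0.le hs0.le)
          (by rw [← add_div, ← hs_def, div_self hs0.ne'])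
      have hint : p₀ ∈ interior K := by
        have := hK.combo_interior_self_mem_interior h0 hq
          (by linarith : (0:ℝ) < 1 - s) (by linarith : (0:ℝ) ≤ s)
          (by ring)
        have he : (1-s) • (0 : EuclideanSpace ℝ (Fin d)) + s • ((a/s) • k₃ + (b/s) • k₂) = p₀ := by
          rw [hp, smul_zero, zero_add, smul_add, smul_smul, smul_smul,
            mul_div_cancel₀ _ hs0.ne', mul_div_cancel₀ _ hs0.ne']
        rwa [he] at this
      exact hfr.2 hint
  · have hsub : (1 - 2*ε) • K ⊆ K := by
      rintro _ ⟨k, hk, rfl⟩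
      have := hK h0K hk (by linarith : (0:ℝ) ≤ 2*ε) hr0 (by ring)
      simpa using this
    have hcs : IsCompact ((1 - 2*ε) • K) := hKc.smul _
    have hVne : volume K ≠ ⊤ := hKc.measure_lt_top.ne
    have hmeas : volume ((1 - 2*ε) • K) = ENNReal.ofReal ((1-2*ε)^d) * volume K := by
      rw [MeasureTheory.Measure.addHaar_smul, finrank_euclideanSpace_fin,
        abs_of_nonneg (pow_nonneg hr0 d)]
    have hpow1 : (1-2*ε)^d ≤ 1 := pow_le_one₀ hr0 hr1
    rw [measure_diff hsub hcs.measurableSet.nullMeasurableSet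
      (by rw [hmeas]; exact ENNReal.mul_ne_top ENNReal.ofReal_ne_top hVne), hmeas]
    rw [ENNReal.ofReal_sub _ (pow_nonneg hr0 d), ENNReal.ofReal_one,
      ENNReal.sub_mul (fun _ _ => hVne), one_mul]
  · have := one_add_mul_le_pow (by linarith : (-2:ℝ) ≤ -(2*ε)) d
    have h2 : ((1:ℝ) + (-(2*ε)))^d = (1-2*ε)^d := by ring_nf
    nlinarith [this]
end

section
/- Let K₀ ⊂ K₁ be convex bodies with the origin O in the interior of K₀, and let S = shadow_{K₁}(R) be the shadow of a region R ⊆ K₁, i.e., the set of points x ∈ K₁ such that segment Ox intersects R. If R is contained in the convex hull of two convex sets M' and M'' where M'' is the image of M' under scaling about O by a factor f ≥ 1, and every ray from O meeting R meets both M' and M'' appropriately, then shadow_{K₁}(M') ⊆ conv(M' ∪ M'') whenever for every x ∈ shadow_{K₁}(M') ∩ ∂K₁ and every b' ∈ Ox ∩ M' we have ‖Ox‖ ≤ f‖Ob'‖. -/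
open scoped Pointwise

/-- The shadow of a region `R ⊆ K` with respect to `K` (with the origin `O` in the
interior of `K`): the set of points `x ∈ K` such that the segment `Ox` intersects `R`. -/
def shadow {d : ℕ} (K R : Set (EuclideanSpace ℝ (Fin d))) : Set (EuclideanSpace ℝ (Fin d)) :=
  {x ∈ K | (segment ℝ 0 x ∩ R).Nonempty}

/-- claim (a) of the main relative-fatness lemma: let `K₀ ⊂ K₁` be convex
bodies with the origin in the interior of `K₀`, `M'` a convex subset of `K₁`, and
`M'' = f • M'` the image of `M'` under scaling about the origin by a factor `f ≥ 1`.
If for every `x ∈ shadow_{K₁}(M') ∩ ∂K₁` and every `b' ∈ Ox ∩ M'` we have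
`‖Ox‖ ≤ f‖Ob'‖`, then `shadow_{K₁}(M') ⊆ conv(M' ∪ M'')`. -/
theorem shadow_subset_convexHull {d : ℕ} (K₀ K₁ M' : Set (EuclideanSpace ℝ (Fin d)))
    (hK₀ : Convex ℝ K₀) (hK₁ : Convex ℝ K₁) (hK₁c : IsCompact K₁)
    (hsub : K₀ ⊂ K₁)
    (h0 : (0 : EuclideanSpace ℝ (Fin d)) ∈ interior K₀)
    (hM' : Convex ℝ M') (hM'K : M' ⊆ K₁)
    (f : ℝ) (hf : 1 ≤ f)
    (hcond : ∀ x ∈ shadow K₁ M' ∩ frontier K₁, ∀ b' ∈ segment ℝ 0 x ∩ M',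
      ‖x‖ ≤ f * ‖b'‖) :
    shadow K₁ M' ⊆ convexHull ℝ (M' ∪ f • M') := by
  -- setup: 0 is in the interior of K₁, K₁ is a neighborhood of 0
  have h0K₁ : (0 : EuclideanSpace ℝ (Fin d)) ∈ interior K₁ :=
    interior_mono hsub.subset h0
  have hnhds : K₁ ∈ nhds (0 : EuclideanSpace ℝ (Fin d)) :=
    mem_interior_iff_mem_nhds.mp h0K₁
  have habs : Absorbent ℝ K₁ := absorbent_nhds_zero hnhds
  have hbdd : Bornology.IsVonNBounded ℝ K₁ :=
    (NormedSpace.isVonNBounded_iff ℝ).mpr hK₁c.isBounded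
  rintro x ⟨hxK, b', hb'seg, hb'M⟩
  -- key: ‖x‖ ≤ f * ‖b'‖ even when x is not on the frontier
  have key : ‖x‖ ≤ f * ‖b'‖ := by
    rcases eq_or_ne x 0 with rfl | hx0
    · simp only [norm_zero]
      positivity
    · set g := gauge K₁ x with hg
      have hg1 : g ≤ 1 := gauge_le_one_of_mem hxK
      have hgpos : 0 < g := (gauge_pos habs hbdd).mpr hx0
      set y : EuclideanSpace ℝ (Fin d) := g⁻¹ • x with hy
      have hgy : gauge K₁ y = 1 := by
        rw [hy, gauge_smul_of_nonneg (inv_nonneg.mpr hgpos.le)]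
        simp [← hg, hgpos.ne']
      have hyfr : y ∈ frontier K₁ :=
        (gauge_eq_one_iff_mem_frontier hK₁ hnhds).mp hgy
      have hyK : y ∈ K₁ := by
        have := hyfr.1
        rwa [hK₁c.isClosed.closure_eq] at this
      have hxseg : x ∈ segment ℝ 0 y := by
        rw [segment_eq_image]
        exact ⟨g, ⟨hgpos.le, hg1⟩, by simp [hy, smul_smul, hgpos.ne']⟩
      have hsub' : segment ℝ 0 x ⊆ segment ℝ 0 y :=
        (convex_segment _ _).segment_subset (left_mem_segment ℝ 0 y) hxseg
      have hyshadow : y ∈ shadow K₁ M' := ⟨hyK, b', hsub' hb'seg, hb'M⟩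
      have hyb : ‖y‖ ≤ f * ‖b'‖ :=
        hcond y ⟨hyshadow, hyfr⟩ b' ⟨hsub' hb'seg, hb'M⟩
      have hxy : ‖x‖ ≤ ‖y‖ := by
        have : x = g • y := by simp [hy, smul_smul, hgpos.ne']
        rw [this, norm_smul, Real.norm_eq_abs, abs_of_pos hgpos]
        nlinarith [norm_nonneg y]
      linarith
  -- express b' = t • x with t ∈ [0,1]
  rw [segment_eq_image] at hb'seg
  obtain ⟨t, ⟨ht0, ht1⟩, htb⟩ := hb'seg
  simp only [smul_zero, zero_add] at htb
  rcases eq_or_ne b' 0 with hb0 | hb0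
  · -- then ‖x‖ ≤ 0 so x = 0 = b' ∈ M'
    have : ‖x‖ ≤ 0 := by rw [hb0, norm_zero, mul_zero] at key; exact key
    have hx0 : x = 0 := norm_eq_zero.mp (le_antisymm this (norm_nonneg x))
    exact subset_convexHull ℝ _ (Set.mem_union_left _ (hx0 ▸ hb0 ▸ hb'M))
  · have ht0' : 0 < t := by
      rcases ht0.lt_or_eq with h | h
      · exact h
      · exfalso; apply hb0; rw [← htb, ← h, zero_smul]
    -- x = t⁻¹ • b', with 1 ≤ t⁻¹ ≤ f
    have hxb : x = t⁻¹ • b' := by rw [← htb, smul_smul, inv_mul_cancel₀ ht0'.ne', one_smul]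
    have hb'pos : 0 < ‖b'‖ := norm_pos_iff.mpr hb0
    have hsle : t⁻¹ ≤ f := by
      have hnx : ‖x‖ = t⁻¹ * ‖b'‖ := by
        rw [hxb, norm_smul, Real.norm_eq_abs, abs_of_pos (inv_pos.mpr ht0')]
      rw [hnx] at key
      exact le_of_mul_le_mul_right (by linarith) hb'pos
    have hsge : 1 ≤ t⁻¹ := (one_le_inv₀ ht0').mpr ht1
    -- x lies on the segment from b' to f • b'
    have hmem1 : b' ∈ convexHull ℝ (M' ∪ f • M') :=
      subset_convexHull ℝ _ (Set.mem_union_left _ hb'M)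
    have hmem2 : f • b' ∈ convexHull ℝ (M' ∪ f • M') :=
      subset_convexHull ℝ _ (Set.mem_union_right _ ⟨b', hb'M, rfl⟩)
    rcases eq_or_lt_of_le hf with hf1 | hf1
    · have : t⁻¹ = 1 := le_antisymm (hf1 ▸ hsle) hsge
      rw [hxb, this, one_smul]
      exact hmem1
    · set s := t⁻¹ with hs
      have hac : x = ((f - s) / (f - 1)) • b' + ((s - 1) / (f - 1)) • (f • b') := by
        have hf1' : f - 1 ≠ 0 := sub_ne_zero.mpr hf1.ne'
        rw [hxb, smul_smul, ← add_smul]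
        congr 1
        rw [div_mul_eq_mul_div, ← add_div, eq_div_iff hf1']
        ring
      rw [hac]
      exact (convex_convexHull ℝ (M' ∪ f • M')) hmem1 hmem2
        (div_nonneg (by linarith) (by linarith)) (div_nonneg (by linarith) (by linarith))
        (by rw [← add_div, div_eq_one_iff_eq (sub_ne_zero.mpr hf1.ne')]; ring)
end

section
/- Let K ⊆ ℝ^d be a convex body whose centroid is at the origin and whose width in every direction is at least ε > 0. Then the Euclidean ball of radius ε/(d+1) centered at the origin is contained in K. -/
open RealInnerProductSpace MeasureTheory Set

lemma aux_hyperplane_null {d : ℕ} (u : EuclideanSpace ℝ (Fin d)) (hu : ‖u‖ = 1) (c : ℝ) :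
    volume {x : EuclideanSpace ℝ (Fin d) | ⟪x, u⟫ = c} = 0 := by
  set H : AffineSubspace ℝ (EuclideanSpace ℝ (Fin d)) :=
    AffineSubspace.mk' (c • u) (ℝ ∙ u)ᗮ with hH
  have horth : ((ℝ ∙ u)ᗮ : Submodule ℝ (EuclideanSpace ℝ (Fin d))) ≠ ⊤ := by
    intro h
    have : u ∈ (ℝ ∙ u)ᗮ := h ▸ Submodule.mem_top
    have := this u (Submodule.mem_span_singleton_self u)
    rw [real_inner_self_eq_norm_sq, hu] at this
    norm_num at this
  have hHne : H ≠ ⊤ := by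
    intro h
    apply horth
    rw [← AffineSubspace.direction_mk' (c • u) ((ℝ ∙ u)ᗮ), ← hH, h, AffineSubspace.direction_top]
  have hset : {x : EuclideanSpace ℝ (Fin d) | ⟪x, u⟫ = c} = (H : Set _) := by
    ext x
    simp only [mem_setOf_eq, SetLike.mem_coe, hH, AffineSubspace.mem_mk',
      Submodule.mem_orthogonal_singleton_iff_inner_right]
    rw [vsub_eq_sub, inner_sub_right, real_inner_smul_right, real_inner_self_eq_norm_sq, hu,
      real_inner_comm u x]
    norm_num [sub_eq_zero]
  rw [hset]
  exact Measure.addHaar_affineSubspace volume H hHne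

lemma aux_integral {d : ℕ} {w : ℝ} (hw : 0 < w) :
    ∫ t in Set.Ioc (0:ℝ) w, ((w - t) / w) ^ d = w / (d + 1) := by
  rw [← intervalIntegral.integral_of_le hw.le]
  have h1 : ∀ t : ℝ, ((w - t) / w) ^ d = (w ^ d)⁻¹ * (w - t) ^ d := by
    intro t; rw [div_pow]; ring
  simp_rw [h1]
  rw [intervalIntegral.integral_const_mul,
    intervalIntegral.integral_comp_sub_left (fun x => x ^ d) w]
  simp only [sub_self, sub_zero]
  rw [integral_pow]
  have hd1 : (0:ℝ) < (d:ℝ) + 1 := by positivity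
  field_simp
  rw [pow_succ]
  ring

set_option maxHeartbeats 1000000 in
/-- let `K ⊆ ℝ^d` be a convex body whose centroid is at the origin
(`∫_K x dx = 0`) and whose width in every direction is at least `ε > 0` (for every unit
`u`, there are points of `K` whose supporting-slab extent in direction `u` is at least
`ε`). Then the Euclidean ball of radius `ε/(d+1)` centered at the origin is contained
in `K`. -/
theorem centroid_width_ball {d : ℕ} (hd : 0 < d) (K : Set (EuclideanSpace ℝ (Fin d)))
    (hK : Convex ℝ K) (hKc : IsCompact K)
    (ε : ℝ) (hε : 0 < ε)
    (hcent : ∫ x in K, x ∂volume = (0 : EuclideanSpace ℝ (Fin d)))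
    (hwidth : ∀ u : EuclideanSpace ℝ (Fin d), ‖u‖ = 1 →
      ∃ x ∈ K, ∃ y ∈ K, ε ≤ ⟪x, u⟫ - ⟪y, u⟫) :
    Metric.closedBall (0 : EuclideanSpace ℝ (Fin d)) (ε / (d + 1)) ⊆ K := by
  intro p hp
  by_contra hpK
  have hd1 : (0:ℝ) < (d:ℝ) + 1 := by positivity
  -- K is nonempty
  have hKne : K.Nonempty := by
    obtain ⟨x, hx, -⟩ := hwidth (EuclideanSpace.single ⟨0, hd⟩ 1) (by simp)
    exact ⟨x, hx⟩
  -- project p onto K, get separating direction u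
  obtain ⟨q, hqK, hq⟩ := exists_norm_eq_iInf_of_complete_convex hKne hKc.isComplete hK p
  have hobt := (norm_eq_iInf_iff_real_inner_le_zero hK hqK).1 hq
  have hpq : p - q ≠ 0 := sub_ne_zero.2 fun h => hpK (h ▸ hqK)
  set δ := ‖p - q‖ with hδdef
  have hδ : 0 < δ := norm_pos_iff.2 hpq
  set u := δ⁻¹ • (p - q) with hudef
  have hu : ‖u‖ = 1 := by
    rw [hudef, norm_smul, norm_inv, Real.norm_eq_abs, abs_of_pos hδ, ← hδdef,
      inv_mul_cancel₀ hδ.ne']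
  set f : EuclideanSpace ℝ (Fin d) → ℝ := fun x => ⟪x, u⟫ with hfdef
  have hfcont : Continuous f := continuous_id.inner continuous_const
  set s := f q with hsdef
  have hfle : ∀ x ∈ K, f x ≤ s := by
    intro x hx
    have h1 := hobt x hx
    have h2 : f x - s = δ⁻¹ * ⟪p - q, x - q⟫ := by
      rw [hfdef, hsdef]
      simp only
      rw [← inner_sub_left, hudef, real_inner_smul_right, real_inner_comm]
    nlinarith [inv_pos.2 hδ]
  have hpu : f p = s + δ := by
    have h2 : f p - s = ⟪p - q, u⟫ := by
      rw [hfdef, hsdef]; simp only; rw [← inner_sub_left]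
    rw [hudef, real_inner_smul_right, real_inner_self_eq_norm_sq, ← hδdef] at h2
    have : δ⁻¹ * δ ^ 2 = δ := by field_simp
    linarith [h2, this.symm ▸ h2]
  have hsmall : s < ε / (d + 1) := by
    have h1 : f p ≤ ‖p‖ := by
      calc f p ≤ ‖p‖ * ‖u‖ := real_inner_le_norm p u
        _ = ‖p‖ := by rw [hu, mul_one]
    have h2 : ‖p‖ ≤ ε / (d + 1) := by
      simpa using mem_closedBall_zero_iff.1 hp
    linarith
  -- width in direction u
  obtain ⟨x₁, hx₁, y₁, hy₁, hxy⟩ := hwidth u hu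
  obtain ⟨z, hzK, hzmin⟩ := hKc.exists_isMinOn hKne hfcont.continuousOn
  set m := f z with hmdef
  have hmle : ∀ x ∈ K, m ≤ f x := fun x hx => hzmin hx
  set w := s - m with hwdef
  have hwε : ε ≤ w := by
    have h1 := hmle y₁ hy₁
    have h2 := hfle x₁ hx₁
    have h3 : ε ≤ f x₁ - f y₁ := hxy
    simp only [hwdef]
    linarith
  have hw : 0 < w := lt_of_lt_of_le hε hwε
  -- positive volume
  have hμKfin : volume K ≠ ⊤ := hKc.measure_lt_top.ne
  have hVpos : 0 < volume K := by
    have hspan : affineSpan ℝ K = ⊤ := by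
      by_contra htop
      have hKs : (affineSpan ℝ K : Set (EuclideanSpace ℝ (Fin d))).Nonempty :=
        hKne.mono (subset_affineSpan ℝ K)
      have hdir : (affineSpan ℝ K).direction ≠ ⊤ := fun h =>
        htop ((AffineSubspace.direction_eq_top_iff_of_nonempty hKs).1 h)
      obtain ⟨v, hv, hv0⟩ : ∃ v ∈ (affineSpan ℝ K).directionᗮ, v ≠ 0 := by
        by_contra h
        push_neg at h
        apply hdir
        have hbot : (affineSpan ℝ K).directionᗮ = ⊥ := by
          rw [Submodule.eq_bot_iff]
          exact fun v hv => by_contra fun h0 => h0 (h v hv)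
        exact Submodule.orthogonal_eq_bot_iff.1 hbot
      set u' := ‖v‖⁻¹ • v with hu'def
      have hvn : 0 < ‖v‖ := norm_pos_iff.2 hv0
      have hu' : ‖u'‖ = 1 := by
        rw [hu'def, norm_smul, norm_inv, Real.norm_eq_abs, abs_of_pos hvn,
          inv_mul_cancel₀ hvn.ne']
      obtain ⟨x, hx, y, hy, hxy'⟩ := hwidth u' hu'
      have hmemd : x - y ∈ (affineSpan ℝ K).direction := by
        have := AffineSubspace.vsub_mem_direction (subset_affineSpan ℝ K hx)
          (subset_affineSpan ℝ K hy)
        simpa using this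
      have hz0 : ⟪x - y, v⟫ = 0 := (Submodule.mem_orthogonal _ v).1 hv (x - y) hmemd
      have hz1 : ⟪x - y, u'⟫ = 0 := by
        rw [hu'def, real_inner_smul_right, hz0, mul_zero]
      rw [inner_sub_left] at hz1
      linarith
    obtain ⟨c, hc⟩ := hK.interior_nonempty_iff_affineSpan_eq_top.2 hspan
    exact lt_of_lt_of_le (isOpen_interior.measure_pos volume ⟨c, hc⟩)
      (measure_mono interior_subset)
  set V := (volume K).toReal with hVdef
  have hV : 0 < V := ENNReal.toReal_pos hVpos.ne' hμKfin
  -- dilation estimate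
  have hdilate : ∀ t : ℝ, 0 ≤ t → t ≤ w →
      ENNReal.ofReal (((w - t) / w) ^ d) * volume K ≤ volume (K ∩ {x | f x ≤ s - t}) := by
    intro t ht htw
    set lam := (w - t) / w with hlamdef
    have hlam0 : 0 ≤ lam := div_nonneg (by linarith) hw.le
    have hlam1 : lam ≤ 1 := by rw [hlamdef, div_le_one hw]; linarith
    have himg : AffineMap.homothety z lam '' K ⊆ K ∩ {x | f x ≤ s - t} := by
      rintro _ ⟨x, hx, rfl⟩
      have hxm := hmle x hx
      have hxs := hfle x hx
      have heq : AffineMap.homothety z lam x = (1 - lam) • z + lam • x := by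
        rw [AffineMap.homothety_apply]
        simp only [vsub_eq_sub, vadd_eq_add]
        module
      constructor
      · rw [heq]
        exact hK hzK hx (by linarith) hlam0 (by ring)
      · show f _ ≤ s - t
        rw [heq]
        have hval : f ((1 - lam) • z + lam • x) = (1 - lam) * m + lam * f x := by
          rw [hfdef]; simp only
          rw [inner_add_left, real_inner_smul_left, real_inner_smul_left]
        rw [hval]
        have h5 : lam * f x ≤ lam * s := mul_le_mul_of_nonneg_left hxs hlam0
        have h6 : (1 - lam) * m + lam * s = s - t := by
          rw [hlamdef]; field_simp; ring
        linarith
    calc ENNReal.ofReal (lam ^ d) * volume K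
        = ENNReal.ofReal |lam ^ Module.finrank ℝ (EuclideanSpace ℝ (Fin d))| * volume K := by
          rw [finrank_euclideanSpace_fin, abs_of_nonneg (pow_nonneg hlam0 d)]
      _ = volume (AffineMap.homothety z lam '' K) :=
          (Measure.addHaar_image_homothety volume z lam K).symm
      _ ≤ volume (K ∩ {x | f x ≤ s - t}) := measure_mono himg
  -- integrability
  have hfint : IntegrableOn f K volume := hfcont.continuousOn.integrableOn_compact hKc
  have hgint : IntegrableOn (fun x => s - f x) K volume :=
    (integrableOn_const hKc.measure_lt_top.ne).sub hfint
  have hgnn : 0 ≤ᵐ[volume.restrict K] fun x => s - f x :=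
    (ae_restrict_iff' hKc.measurableSet).2 (ae_of_all _ fun x hx => sub_nonneg.2 (hfle x hx))
  have hlayer := lintegral_eq_lintegral_meas_lt (volume.restrict K) hgnn
    (continuous_const.sub hfcont).aemeasurable
  -- key inequality
  have key : ENNReal.ofReal (w / (d + 1)) * volume K
      ≤ ENNReal.ofReal (∫ x in K, (s - f x) ∂volume) := by
    rw [ofReal_integral_eq_lintegral_ofReal hgint hgnn, hlayer]
    have hstep : ∀ t ∈ Set.Ioc (0:ℝ) w,
        ENNReal.ofReal (((w - t) / w) ^ d) * volume K
          ≤ (volume.restrict K) {x | t < s - f x} := by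
      intro t ht
      have hms : MeasurableSet {x : EuclideanSpace ℝ (Fin d) | t < s - f x} :=
        measurableSet_lt measurable_const (continuous_const.sub hfcont).measurable
      rw [Measure.restrict_apply hms]
      have hsub : K ∩ {x | f x ≤ s - t} ⊆
          ({x | t < s - f x} ∩ K) ∪ {x | f x = s - t} := by
        rintro x ⟨hxK, hxle⟩
        have hxle' : f x ≤ s - t := hxle
        rcases lt_or_eq_of_le hxle' with h | h
        · exact Or.inl ⟨by simp only [mem_setOf_eq]; linarith, hxK⟩
        · exact Or.inr h
      have h9 : volume (K ∩ {x | f x ≤ s - t})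
          ≤ volume ({x | t < s - f x} ∩ K) := by
        calc volume (K ∩ {x | f x ≤ s - t})
            ≤ volume (({x | t < s - f x} ∩ K) ∪ {x | f x = s - t}) := measure_mono hsub
          _ ≤ volume ({x | t < s - f x} ∩ K) + volume {x | f x = s - t} := measure_union_le _ _
          _ = volume ({x | t < s - f x} ∩ K) := by
              rw [aux_hyperplane_null u hu (s - t), add_zero]
      exact le_trans (hdilate t ht.1.le ht.2) h9
    calc ENNReal.ofReal (w / (d + 1)) * volume K
        = ∫⁻ t in Set.Ioc (0:ℝ) w, ENNReal.ofReal (((w - t) / w) ^ d) * volume K := by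
          rw [lintegral_mul_const _ (by fun_prop : Measurable fun t : ℝ =>
            ENNReal.ofReal (((w - t) / w) ^ d))]
          congr 1
          rw [← ofReal_integral_eq_lintegral_ofReal
            (by apply Continuous.integrableOn_Ioc; fun_prop)
            ((ae_restrict_iff' measurableSet_Ioc).2 (ae_of_all _ fun t ht =>
              pow_nonneg (div_nonneg (by linarith [ht.2]) hw.le) d)), aux_integral hw]
      _ ≤ ∫⁻ t in Set.Ioc (0:ℝ) w, (volume.restrict K) {x | t < s - f x} :=
          setLIntegral_mono' measurableSet_Ioc hstep
      _ ≤ ∫⁻ t in Set.Ioi (0:ℝ), (volume.restrict K) {x | t < s - f x} :=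
          lintegral_mono_set Set.Ioc_subset_Ioi_self
  -- compute the integral using centroid
  have hidint : IntegrableOn (fun x : EuclideanSpace ℝ (Fin d) => x) K volume :=
    continuous_id.continuousOn.integrableOn_compact hKc
  have hIf : ∫ x in K, f x ∂volume = 0 := by
    have hcomm := ContinuousLinearMap.integral_comp_comm (innerSL ℝ u) hidint
    rw [hcent] at hcomm
    simp only [innerSL_apply_apply, inner_zero_right] at hcomm
    calc ∫ x in K, f x ∂volume = ∫ x in K, ⟪u, x⟫ ∂volume := by
          simp_rw [hfdef, real_inner_comm]
      _ = 0 := hcomm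
  have hIg : ∫ x in K, (s - f x) ∂volume = s * V := by
    rw [integral_sub (integrableOn_const (C := s) hKc.measure_lt_top.ne) hfint, hIf,
      setIntegral_const, sub_zero, smul_eq_mul, hVdef, mul_comm, measureReal_def]
  -- conclude
  have hKV : volume K = ENNReal.ofReal V := (ENNReal.ofReal_toReal hμKfin).symm
  rw [hKV, ← ENNReal.ofReal_mul (by positivity), hIg] at key
  have hfin : w / (d + 1) * V ≤ s * V := by
    rcases ENNReal.ofReal_le_ofReal_iff'.1 key with h | h
    · exact h
    · exfalso; nlinarith [div_pos hw hd1]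
  have hws : w / (d + 1) ≤ s := le_of_mul_le_mul_right hfin hV
  have h2 : ε / (↑d + 1) ≤ w / (↑d + 1) := by gcongr
  linarith
end
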